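/- Let φ be a flat ADT formula in negation normal form with size constraints over a well-defined ADT, and let φ₀, φ₁, … be an unfolding sequence for φ. For every i ∈ ℕ: if the reduct φ̃ᵢ is unsatisfiable over EUF+LIA, then φ is unsatisfiable over the ADT with size. -/

import Mathlib

/-!
Reduction of ADT constraints **with size constraints** to EUF+LIA:
soundness for unsatisfiability (Lemma 1 of the paper).
-/

structure ADTSig where
  numSorts : ℕ
  numCtors : ℕ
  ctorArgs : Fin numCtors → List (Fin numSorts)
  ctorRes : Fin numCtors → Fin numSorts

namespace ADTSig

inductive Term (S : ADTSig) : Fin S.numSorts → Type where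
  | mk (f : Fin S.numCtors)
      (args : (i : Fin (S.ctorArgs f).length) → Term S ((S.ctorArgs f).get i)) :
      Term S (S.ctorRes f)

/-- The size `|t|` of a constructor term: the number of constructor
occurrences. -/
def Term.size {S : ADTSig} : {σ : Fin S.numSorts} → Term S σ → ℕ
  | _, .mk _ args => 1 + ∑ i, (args i).size

def Term.head {S : ADTSig} : {σ : Fin S.numSorts} → Term S σ → Fin S.numCtors
  | _, .mk f _ => f

def WellDefined (S : ADTSig) : Prop := ∀ σ, Nonempty (S.Term σ)

structure SelInterp (S : ADTSig) where
  sel : (f : Fin S.numCtors) → (i : Fin (S.ctorArgs f).length) →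
    S.Term (S.ctorRes f) → S.Term ((S.ctorArgs f).get i)
  sel_mk : ∀ f i args, sel f i (Term.mk f args) = args i

/-! ### Presburger formulas (for the size constraints) -/

inductive PTerm (n : ℕ) where
  | cst (c : ℤ)
  | var (i : Fin n)
  | add (s t : PTerm n)
  | smul (c : ℤ) (t : PTerm n)

def PTerm.eval {n : ℕ} (ρ : Fin n → ℤ) : PTerm n → ℤ
  | .cst c => c
  | .var i => ρ i
  | .add s t => s.eval ρ + t.eval ρ
  | .smul c t => c * t.eval ρ

inductive PForm : ℕ → Type where
  | le {n} (s t : PTerm n) : PForm n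
  | peq {n} (s t : PTerm n) : PForm n
  | not {n} (φ : PForm n) : PForm n
  | and {n} (φ ψ : PForm n) : PForm n
  | or {n} (φ ψ : PForm n) : PForm n
  | ex {n} (φ : PForm (n + 1)) : PForm n

def PForm.eval : {n : ℕ} → (Fin n → ℤ) → PForm n → Prop
  | _, ρ, .le s t => s.eval ρ ≤ t.eval ρ
  | _, ρ, .peq s t => s.eval ρ = t.eval ρ
  | _, ρ, .not φ => ¬ φ.eval ρ
  | _, ρ, .and φ ψ => φ.eval ρ ∧ ψ.eval ρ
  | _, ρ, .or φ ψ => φ.eval ρ ∨ ψ.eval ρ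
  | _, ρ, .ex φ => ∃ z : ℤ, φ.eval (Fin.cons z ρ)

/-! ### Flat formulas with size constraints -/

/-- Literals of flat ADT formulas with size constraints: as in the size-free
case, plus Presburger constraints `φ_Pres(|x₁|,…,|x_n|)` on the sizes of
(the terms assigned to) variables. -/
inductive Lit (S : ADTSig) (V : Fin S.numSorts → Type) where
  | ctorEq (f : Fin S.numCtors)
      (xs : (i : Fin (S.ctorArgs f).length) → V ((S.ctorArgs f).get i))
      (x0 : V (S.ctorRes f))
  | selEq (f : Fin S.numCtors) (j : Fin (S.ctorArgs f).length)
      (x : V (S.ctorRes f)) (y : V ((S.ctorArgs f).get j))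
  | tst (f : Fin S.numCtors) (x : V (S.ctorRes f))
  | ntst (f : Fin S.numCtors) (x : V (S.ctorRes f))
  | eqv {σ : Fin S.numSorts} (x y : V σ)
  | nev {σ : Fin S.numSorts} (x y : V σ)
  | sizeC {n : ℕ} (xs : Fin n → Σ σ, V σ) (P : PForm n)

inductive Formula (S : ADTSig) (V : Fin S.numSorts → Type) where
  | fls
  | lit (l : Lit S V)
  | and (φ ψ : Formula S V)
  | or (φ ψ : Formula S V)

variable {S : ADTSig} {V : Fin S.numSorts → Type}

def Lit.holds (I : SelInterp S) (β : (σ : Fin S.numSorts) → V σ → S.Term σ) :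
    Lit S V → Prop
  | .ctorEq f xs x0 => Term.mk f (fun i => β _ (xs i)) = β _ x0
  | .selEq f j x y => I.sel f j (β _ x) = β _ y
  | .tst f x => (β _ x).head = f
  | .ntst f x => (β _ x).head ≠ f
  | .eqv x y => β _ x = β _ y
  | .nev x y => β _ x ≠ β _ y
  | .sizeC xs P => P.eval (fun i => ((β (xs i).1 (xs i).2).size : ℤ))

def Formula.holds (I : SelInterp S) (β : (σ : Fin S.numSorts) → V σ → S.Term σ) :
    Formula S V → Prop
  | .fls => False
  | .lit l => l.holds I β
  | .and φ ψ => φ.holds I β ∧ ψ.holds I β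
  | .or φ ψ => φ.holds I β ∨ ψ.holds I β

def Formula.ADTSat (φ : Formula S V) : Prop :=
  ∃ (I : SelInterp S) (β : (σ : Fin S.numSorts) → V σ → S.Term σ), φ.holds I β

/-! ### The EUF+LIA side, with size functions -/

/-- An EUF+LIA model for the vocabulary of the reduction with size: `size_σ`
replaces `depth_σ`. -/
structure RModel (S : ADTSig) where
  ctorF : (f : Fin S.numCtors) → (Fin (S.ctorArgs f).length → ℤ) → ℤ
  selF : (f : Fin S.numCtors) → Fin (S.ctorArgs f).length → ℤ → ℤ
  ctorIdF : Fin S.numSorts → ℤ → ℤ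
  sizeF : Fin S.numSorts → ℤ → ℤ

def ctorIdx' (S : ADTSig) (f : Fin S.numCtors) : ℤ :=
  ((Finset.univ.filter
      (fun g : Fin S.numCtors => g ≤ f ∧ S.ctorRes g = S.ctorRes f)).card : ℤ)

def InSort (S : ADTSig) (σ : Fin S.numSorts) (x : ℤ) : Prop :=
  Finite (S.Term σ) → (0 ≤ x ∧ x < (Nat.card (S.Term σ) : ℤ))

/-- The size image `𝕊_σ` of a sort, as a set of integers. -/
def SizeImageZ (S : ADTSig) (σ : Fin S.numSorts) : Set ℤ :=
  {z | ∃ t : S.Term σ, (t.size : ℤ) = z}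

/-- `CtorSpec′_f(x₀,…,x_n)` of Table II. -/
def CtorSpec' (M : RModel S) (f : Fin S.numCtors) (x0 : ℤ)
    (xs : Fin (S.ctorArgs f).length → ℤ) : Prop :=
  M.ctorF f xs = x0 ∧
  M.ctorIdF (S.ctorRes f) x0 = ctorIdx' S f ∧
  (∀ j, M.selF f j x0 = xs j ∧
     M.sizeF ((S.ctorArgs f).get j) (xs j) ∈ SizeImageZ S ((S.ctorArgs f).get j)) ∧
  M.sizeF (S.ctorRes f) x0 = 1 + ∑ j, M.sizeF ((S.ctorArgs f).get j) (xs j)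

def ExCtorSpec' (M : RModel S) (f : Fin S.numCtors) (x : ℤ) : Prop :=
  ∃ xs : Fin (S.ctorArgs f).length → ℤ,
    (∀ j, InSort S ((S.ctorArgs f).get j) (xs j)) ∧ CtorSpec' M f x xs

/-- The reduct of a literal: rules (1)–(6) with `CtorSpec′`, and rule (7) for
size literals (`|x| ≈ y` becomes `size_σ(x̃) ≈ y ∧ y ∈ 𝕊_σ`). -/
def Lit.redHolds (M : RModel S) (β : (σ : Fin S.numSorts) → V σ → ℤ) :
    Lit S V → Prop
  | .ctorEq f xs x0 => CtorSpec' M f (β _ x0) (fun i => β _ (xs i))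
  | .selEq f j x y => M.selF f j (β _ x) = β _ y ∧
      ∃ g, S.ctorRes g = S.ctorRes f ∧ ExCtorSpec' M g (β _ x)
  | .tst f x => ExCtorSpec' M f (β _ x)
  | .ntst f x => ∃ g, S.ctorRes g = S.ctorRes f ∧ g ≠ f ∧ ExCtorSpec' M g (β _ x)
  | .eqv x y => β _ x = β _ y
  | .nev x y => β _ x ≠ β _ y
  | .sizeC xs P =>
      P.eval (fun i => M.sizeF (xs i).1 (β (xs i).1 (xs i).2)) ∧
      ∀ i, M.sizeF (xs i).1 (β (xs i).1 (xs i).2) ∈ SizeImageZ S (xs i).1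

def Formula.redHolds (M : RModel S) (β : (σ : Fin S.numSorts) → V σ → ℤ) :
    Formula S V → Prop
  | .fls => False
  | .lit l => l.redHolds M β
  | .and φ ψ => φ.redHolds M β ∧ ψ.redHolds M β
  | .or φ ψ => φ.redHolds M β ∨ ψ.redHolds M β

def Formula.RedSat (φ : Formula S V) : Prop :=
  ∃ (M : RModel S) (β : (σ : Fin S.numSorts) → V σ → ℤ),
    φ.redHolds M β ∧ ∀ σ (x : V σ), InSort S σ (β σ x)


/-! ### Variables and unfolding -/

/-- The list of (sorted) variables occurring in a literal. -/
def Lit.varList : Lit S V → List (Σ σ, V σ)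
  | .ctorEq _ xs x0 => ⟨_, x0⟩ :: List.ofFn (fun i => ⟨_, xs i⟩)
  | .selEq _ _ x y => [⟨_, x⟩, ⟨_, y⟩]
  | .tst _ x => [⟨_, x⟩]
  | .ntst _ x => [⟨_, x⟩]
  | .eqv x y => [⟨_, x⟩, ⟨_, y⟩]
  | .nev x y => [⟨_, x⟩, ⟨_, y⟩]
  | .sizeC xs _ => List.ofFn xs

/-- The list of (sorted) variables occurring in a formula. -/
def Formula.varList : Formula S V → List (Σ σ, V σ)
  | .fls => []
  | .lit l => l.varList
  | .and φ ψ => φ.varList ++ ψ.varList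
  | .or φ ψ => φ.varList ++ ψ.varList

/-- The disjunction `⋁_{f_j : σ} f_j(x₁ʲ, x₂ʲ, …) ≈ x` over all constructors
of sort `σ`, with argument variables `fresh`. -/
def unfoldDisj (σ : Fin S.numSorts) (x : V σ)
    (fresh : (f : Fin S.numCtors) → (i : Fin (S.ctorArgs f).length) →
       V ((S.ctorArgs f).get i)) : Formula S V :=
  ((List.finRange S.numCtors).map (fun f =>
      if h : S.ctorRes f = σ then
        Formula.lit (Lit.ctorEq f (fresh f) (cast (congrArg V h.symm) x))
      else Formula.fls)).foldr Formula.or Formula.fls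

/-- `φ'` is obtained from `φ` by unfolding the variable `u` (which occurs in
`φ`), using pairwise distinct fresh argument variables. -/
def IsUnfoldStepAt (φ φ' : Formula S V) (u : Σ σ, V σ) : Prop :=
  ∃ fresh : (f : Fin S.numCtors) → (i : Fin (S.ctorArgs f).length) →
      V ((S.ctorArgs f).get i),
    u ∈ φ.varList ∧
    (∀ f i, (⟨_, fresh f i⟩ : Σ σ, V σ) ∉ φ.varList) ∧
    (∀ f i f' i', (⟨_, fresh f i⟩ : Σ σ, V σ) = ⟨_, fresh f' i'⟩ →
       (⟨f, i⟩ : Σ f : Fin S.numCtors, Fin (S.ctorArgs f).length) = ⟨f', i'⟩) ∧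
    φ' = φ.and (unfoldDisj u.1 u.2 fresh)


/-! ### Auxiliary development -/

theorem Term.exists_rep {σ : Fin S.numSorts} (t : S.Term σ) :
    ∃ (f : Fin S.numCtors) (h : S.ctorRes f = σ)
      (args : (i : Fin (S.ctorArgs f).length) → S.Term ((S.ctorArgs f).get i)),
      HEq t (Term.mk f args) := by
  cases t with
  | mk f args => exact ⟨f, rfl, args, HEq.rfl⟩

theorem Term.head_res {σ : Fin S.numSorts} (t : S.Term σ) : S.ctorRes t.head = σ := by
  cases t; rfl

/-- A numeric encoding of constructor terms. -/
def Term.enc : {σ : Fin S.numSorts} → S.Term σ → ℕ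
  | _, .mk f args => Nat.pair f.val (Encodable.encode (List.ofFn fun i => (args i).enc))

theorem Term.enc_injH : ∀ {σ : Fin S.numSorts} (t : S.Term σ) {σ' : Fin S.numSorts}
    (t' : S.Term σ'), t.enc = t'.enc → σ = σ' ∧ HEq t t' := by
  intro σ t
  induction t with
  | mk f args ih =>
    intro σ' t' h
    cases t' with
    | mk f' args' =>
      rw [Term.enc, Term.enc] at h
      obtain ⟨h1, h2⟩ := Nat.pair_eq_pair.mp h
      have hf : f = f' := Fin.val_injective h1
      subst hf
      have h3 := Encodable.encode_injective h2
      have h4 : (fun i => (args i).enc) = fun i => (args' i).enc :=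
        List.ofFn_injective h3
      have : args = args' := by
        funext i
        exact eq_of_heq ((ih i (args' i) (congrFun h4 i)).2)
      subst this
      exact ⟨rfl, HEq.rfl⟩

theorem Term.enc_inj {σ : Fin S.numSorts} : Function.Injective (Term.enc (σ := σ) (S := S)) :=
  fun t t' h => eq_of_heq (Term.enc_injH t t' h).2

/-- An injective embedding of terms into ℤ which lands in `[0, card)` when
the sort is finite. -/
noncomputable def emb (S : ADTSig) (σ : Fin S.numSorts) : S.Term σ → ℤ :=
  @dite _ (Finite (S.Term σ)) (Classical.dec _)
    (fun _h =>
      letI := Fintype.ofFinite (S.Term σ)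
      fun t => ((Fintype.equivFin (S.Term σ) t : ℕ) : ℤ))
    (fun _ t => (t.enc : ℤ))

theorem emb_injective (S : ADTSig) (σ : Fin S.numSorts) : Function.Injective (emb S σ) := by
  unfold emb
  split
  · letI := Fintype.ofFinite (S.Term σ)
    intro a b h
    exact (Fintype.equivFin (S.Term σ)).injective (Fin.val_injective (Int.ofNat.inj h))
  · intro a b h
    exact Term.enc_inj (Int.ofNat.inj h)

theorem emb_insort (S : ADTSig) (σ : Fin S.numSorts) (t : S.Term σ) :
    InSort S σ (emb S σ t) := by
  intro hfin
  unfold emb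
  rw [dif_pos hfin]
  letI := Fintype.ofFinite (S.Term σ)
  constructor
  · positivity
  · rw [Nat.card_eq_fintype_card]
    exact_mod_cast (Fintype.equivFin (S.Term σ) t).isLt

/-- Partial inverse of `emb`. -/
noncomputable def dec (S : ADTSig) (hS : S.WellDefined) (σ : Fin S.numSorts) :
    ℤ → S.Term σ :=
  haveI := hS σ
  Function.invFun (emb S σ)

theorem dec_emb (S : ADTSig) (hS : S.WellDefined) (σ : Fin S.numSorts) (t : S.Term σ) :
    dec S hS σ (emb S σ t) = t := by
  haveI := hS σ
  exact Function.leftInverse_invFun (emb_injective S σ) t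

/-- The canonical EUF+LIA model associated to an ADT interpretation. -/
noncomputable def canonModel (S : ADTSig) (hS : S.WellDefined) (I : SelInterp S) :
    RModel S where
  ctorF f xs := emb S _ (Term.mk f (fun i => dec S hS _ (xs i)))
  selF f j z := emb S _ (I.sel f j (dec S hS _ z))
  ctorIdF σ z := ctorIdx' S ((dec S hS σ z).head)
  sizeF σ z := ((dec S hS σ z).size : ℤ)

theorem canon_ctorSpec' (S : ADTSig) (hS : S.WellDefined) (I : SelInterp S)
    (f : Fin S.numCtors)
    (args : (i : Fin (S.ctorArgs f).length) → S.Term ((S.ctorArgs f).get i)) :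
    CtorSpec' (canonModel S hS I) f (emb S _ (Term.mk f args))
      (fun i => emb S _ (args i)) := by
  refine ⟨?_, ?_, ?_, ?_⟩
  · show emb S _ (Term.mk f fun i => dec S hS _ (emb S _ (args i))) = _
    have : (fun i => dec S hS _ (emb S _ (args i))) = args := by
      funext i; rw [dec_emb]
    rw [this]
  · show ctorIdx' S (dec S hS _ (emb S _ (Term.mk f args))).head = _
    rw [dec_emb]
    rfl
  · intro j
    constructor
    · show emb S _ (I.sel f j (dec S hS _ (emb S _ (Term.mk f args)))) = _
      rw [dec_emb, I.sel_mk]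
    · exact ⟨args j, by rw [show (canonModel S hS I).sizeF _ _ =
        ((dec S hS _ (emb S _ (args j))).size : ℤ) from rfl, dec_emb]⟩
  · show ((dec S hS _ (emb S _ (Term.mk f args))).size : ℤ) = _
    rw [dec_emb]
    show ((Term.mk f args).size : ℤ) = 1 + ∑ j, ((dec S hS _ (emb S _ (args j))).size : ℤ)
    have : ∀ j, dec S hS _ (emb S _ (args j)) = args j := fun j => dec_emb S hS _ _
    simp only [this, Term.size]
    push_cast
    ring

theorem canon_exCtorSpec' (S : ADTSig) (hS : S.WellDefined) (I : SelInterp S)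
    {σ : Fin S.numSorts} (t : S.Term σ) :
    ExCtorSpec' (canonModel S hS I) t.head (emb S σ t) := by
  cases t with
  | mk f args =>
    exact ⟨fun i => emb S _ (args i), fun j => emb_insort S _ _,
      canon_ctorSpec' S hS I f args⟩

theorem redSat_of_adtSat (S : ADTSig) (hS : S.WellDefined) {V : Fin S.numSorts → Type}
    {φ : Formula S V} (h : φ.ADTSat) : φ.RedSat := by
  obtain ⟨I, β, hβ⟩ := h
  refine ⟨canonModel S hS I, fun σ x => emb S σ (β σ x), ?_, fun σ x => emb_insort S σ _⟩
  clear * - hβ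
  induction φ with
  | fls => exact hβ
  | and φ ψ ihφ ihψ => exact ⟨ihφ hβ.1, ihψ hβ.2⟩
  | or φ ψ ihφ ihψ =>
    rcases hβ with h | h
    · exact Or.inl (ihφ h)
    · exact Or.inr (ihψ h)
  | lit l =>
    cases l with
    | ctorEq f xs x0 =>
      have := canon_ctorSpec' S hS I f (fun i => β _ (xs i))
      rw [hβ] at this
      exact this
    | selEq f j x y =>
      refine ⟨?_, (β _ x).head, Term.head_res _, canon_exCtorSpec' S hS I _⟩
      show emb S _ (I.sel f j (dec S hS _ (emb S _ (β _ x)))) = _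
      rw [dec_emb, hβ]
    | tst f x =>
      have := canon_exCtorSpec' S hS I (β _ x)
      rwa [hβ] at this
    | ntst f x =>
      exact ⟨(β _ x).head, Term.head_res _, hβ, canon_exCtorSpec' S hS I _⟩
    | eqv x y => exact congrArg _ hβ
    | nev x y => exact fun hc => hβ (emb_injective S _ hc)
    | sizeC xs P =>
      have hsz : ∀ i, (canonModel S hS I).sizeF (xs i).1
          (emb S (xs i).1 (β (xs i).1 (xs i).2)) = ((β (xs i).1 (xs i).2).size : ℤ) := by
        intro i
        show ((dec S hS _ (emb S _ _)).size : ℤ) = _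
        rw [dec_emb]
      constructor
      · simp only [hsz]; exact hβ
      · intro i; rw [hsz]; exact ⟨_, rfl⟩

theorem Formula.holds_congr {I : SelInterp S} {β β' : (σ : Fin S.numSorts) → V σ → S.Term σ}
    (φ : Formula S V) (h : ∀ v ∈ φ.varList, β v.1 v.2 = β' v.1 v.2) :
    φ.holds I β ↔ φ.holds I β' := by
  induction φ with
  | fls => rfl
  | and φ ψ ihφ ihψ =>
    simp only [Formula.varList, List.mem_append] at h
    exact and_congr (ihφ fun v hv => h v (Or.inl hv)) (ihψ fun v hv => h v (Or.inr hv))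
  | or φ ψ ihφ ihψ =>
    simp only [Formula.varList, List.mem_append] at h
    exact or_congr (ihφ fun v hv => h v (Or.inl hv)) (ihψ fun v hv => h v (Or.inr hv))
  | lit l =>
    show l.holds I β ↔ l.holds I β'
    cases l with
    | ctorEq f xs x0 =>
      simp only [Formula.varList, Lit.varList, List.mem_cons, List.mem_ofFn] at h
      have h0 := h ⟨_, x0⟩ (Or.inl rfl)
      have hxs : ∀ i, β _ (xs i) = β' _ (xs i) := fun i =>
        h ⟨_, xs i⟩ (Or.inr ⟨i, rfl⟩)
      show Term.mk f (fun i => β _ (xs i)) = β _ x0 ↔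
        Term.mk f (fun i => β' _ (xs i)) = β' _ x0
      rw [h0]
      exact ⟨fun he => by rw [← he]; congr 1; funext i; exact (hxs i).symm,
             fun he => by rw [← he]; congr 1; funext i; exact hxs i⟩
    | selEq f j x y =>
      simp only [Formula.varList, Lit.varList, List.mem_cons, List.not_mem_nil] at h
      have hx := h ⟨_, x⟩ (Or.inl rfl)
      have hy := h ⟨_, y⟩ (Or.inr (Or.inl rfl))
      show I.sel f j (β _ x) = β _ y ↔ I.sel f j (β' _ x) = β' _ y
      rw [hx, hy]
    | tst f x =>
      have hx := h ⟨_, x⟩ (List.mem_singleton.mpr rfl)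
      show (β _ x).head = f ↔ (β' _ x).head = f
      rw [hx]
    | ntst f x =>
      have hx := h ⟨_, x⟩ (List.mem_singleton.mpr rfl)
      show (β _ x).head ≠ f ↔ (β' _ x).head ≠ f
      rw [hx]
    | eqv x y =>
      simp only [Formula.varList, Lit.varList, List.mem_cons, List.not_mem_nil] at h
      have hx := h ⟨_, x⟩ (Or.inl rfl)
      have hy := h ⟨_, y⟩ (Or.inr (Or.inl rfl))
      show β _ x = β _ y ↔ β' _ x = β' _ y
      rw [hx, hy]
    | nev x y =>
      simp only [Formula.varList, Lit.varList, List.mem_cons, List.not_mem_nil] at h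
      have hx := h ⟨_, x⟩ (Or.inl rfl)
      have hy := h ⟨_, y⟩ (Or.inr (Or.inl rfl))
      show β _ x ≠ β _ y ↔ β' _ x ≠ β' _ y
      rw [hx, hy]
    | sizeC xs P =>
      simp only [Formula.varList, Lit.varList, List.mem_ofFn] at h
      have hxs : ∀ i, β (xs i).1 (xs i).2 = β' (xs i).1 (xs i).2 := fun i =>
        h (xs i) ⟨i, rfl⟩
      show P.eval _ ↔ P.eval _
      have : (fun i => ((β (xs i).1 (xs i).2).size : ℤ)) =
          fun i => ((β' (xs i).1 (xs i).2).size : ℤ) := by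
        funext i; rw [hxs i]
      rw [this]

theorem holds_of_mem_foldr {I : SelInterp S} {β : (σ : Fin S.numSorts) → V σ → S.Term σ}
    {l : List (Formula S V)} {F : Formula S V}
    (hm : F ∈ l) (h : F.holds I β) : (l.foldr Formula.or Formula.fls).holds I β := by
  induction l with
  | nil => cases hm
  | cons a l ih =>
    rcases List.mem_cons.mp hm with rfl | hm
    · exact Or.inl h
    · exact Or.inr (ih hm)

theorem adtSat_step {φ φ' : Formula S V} {u : Σ σ, V σ} (h : IsUnfoldStepAt φ φ' u)
    {I : SelInterp S} {βi : (σ : Fin S.numSorts) → V σ → S.Term σ}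
    (hφ : φ.holds I βi) : ∃ β, φ'.holds I β := by
  classical
  obtain ⟨fresh, hu, hfr, hinj, rfl⟩ := h
  obtain ⟨σu, xu⟩ := u
  obtain ⟨f0, hres, args, hheq⟩ := Term.exists_rep (βi σu xu)
  subst hres
  have ht : βi (S.ctorRes f0) xu = Term.mk f0 args := eq_of_heq hheq
  set β' : (σ : Fin S.numSorts) → V σ → S.Term σ := fun σ x =>
    if hx : ∃ j : Fin (S.ctorArgs f0).length,
        (⟨σ, x⟩ : Σ σ, V σ) = ⟨_, fresh f0 j⟩ then
      cast (congrArg S.Term (congrArg Sigma.fst hx.choose_spec).symm) (args hx.choose)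
    else βi σ x with hβ'
  have hA : ∀ (σ) (x : V σ), (⟨σ, x⟩ : Σ σ, V σ) ∈ φ.varList → β' σ x = βi σ x := by
    intro σ x hmem
    refine dif_neg ?_
    rintro ⟨j, hj⟩
    rw [hj] at hmem
    exact hfr f0 j hmem
  have hB : ∀ j, β' _ (fresh f0 j) = args j := by
    intro j
    have hex : ∃ j' : Fin (S.ctorArgs f0).length,
        (⟨_, fresh f0 j⟩ : Σ σ, V σ) = ⟨_, fresh f0 j'⟩ := ⟨j, rfl⟩
    have h1 : β' ((S.ctorArgs f0).get j) (fresh f0 j) =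
        cast (congrArg S.Term (congrArg Sigma.fst hex.choose_spec).symm) (args hex.choose) :=
      dif_pos hex
    rw [h1]
    have hj' : hex.choose = j := by
      have := hinj f0 j f0 hex.choose hex.choose_spec
      have h2 : j = hex.choose := by simpa using this
      exact h2.symm
    have h3 : HEq (args hex.choose) (args j) := by rw [hj']
    exact eq_of_heq ((cast_heq _ _).trans h3)
  have hC : β' (S.ctorRes f0) xu = Term.mk f0 args := by
    rw [hA _ _ hu, ht]
  refine ⟨β', ?_, ?_⟩
  · exact (Formula.holds_congr φ (fun v hv => (hA v.1 v.2 hv).symm)).mp hφ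
  · show (unfoldDisj (S.ctorRes f0) xu fresh).holds I β'
    unfold unfoldDisj
    apply holds_of_mem_foldr (F := Formula.lit
      (Lit.ctorEq f0 (fresh f0) (cast (congrArg V (rfl : S.ctorRes f0 = S.ctorRes f0).symm) xu)))
    · exact List.mem_map.mpr ⟨f0, List.mem_finRange f0, by rw [dif_pos rfl]⟩
    · show Term.mk f0 (fun i => β' _ (fresh f0 i)) = β' _ (cast _ xu)
      have hcast : cast (congrArg V (rfl : S.ctorRes f0 = S.ctorRes f0).symm) xu = xu := by
        simp
      rw [hcast, hC]
      congr 1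
      funext i
      exact hB i

end ADTSig

open ADTSig in
/-- **Lemma 2 (1).** For any unfolding sequence `φ₀, φ₁, …` of a flat ADT
formula `φ` in NNF with size constraints: if the reduct `φ̃ᵢ` is unsatisfiable
over EUF+LIA, then `φ` is unsatisfiable over the ADT with size. -/
theorem unfolding_sound (S : ADTSig) (hS : S.WellDefined)
    (V : Fin S.numSorts → Type) (φ : Formula S V)
    (ψ : ℕ → Formula S V) (us : ℕ → Σ σ, V σ)
    (h0 : ψ 0 = φ)
    (hstep : ∀ i, IsUnfoldStepAt (ψ i) (ψ (i + 1)) (us i))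
    (i : ℕ) (hunsat : ¬ (ψ i).RedSat) : ¬ φ.ADTSat := by
  intro hsat
  obtain ⟨I, β0, hβ0⟩ := hsat
  have key : ∀ i, ∃ β, (ψ i).holds I β := by
    intro i
    induction i with
    | zero => exact ⟨β0, h0 ▸ hβ0⟩
    | succ n ih =>
      obtain ⟨β, hβ⟩ := ih
      exact adtSat_step (hstep n) hβ
  obtain ⟨β, hβ⟩ := key i
  exact hunsat (redSat_of_adtSat S hS ⟨I, β, hβ⟩)
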